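/- For every integer n ≥ 1, every real number y > 1, and all real numbers u_1, …, u_n ∈ (0,1] with u_1 + ⋯ + u_n = 1, one has 1/(y − 1) ≥ ∑_{i=1}^n 1/(y^{1/u_i} − 1). -/
import Mathlib


/-- Non-strict version of Lemma A.1: for `n ≥ 1`, `y > 1` and `u₁, …, uₙ ∈ (0,1]`
summing to `1`, `1/(y − 1) ≥ ∑ᵢ 1/(y^(1/uᵢ) − 1)`. -/
theorem one_div_sub_one_ge_sum_rpow
    (n : ℕ) (hn : 1 ≤ n) (y : ℝ) (hy : 1 < y)
    (u : Fin n → ℝ) (hu : ∀ i, u i ∈ Set.Ioc (0 : ℝ) 1)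
    (hsum : ∑ i, u i = 1) :
    1 / (y - 1) ≥ ∑ i, 1 / (y ^ (1 / u i) - 1) := by
  rw [ge_iff_le]
  have hy1 : (0:ℝ) < y - 1 := by linarith
  have key : ∀ i, 1 / (y ^ (1 / u i) - 1) ≤ u i * (1 / (y - 1)) := by
    intro i
    obtain ⟨hu0, hu1⟩ := hu i
    have ht : 1 ≤ 1 / u i := by rw [le_div_iff₀ hu0]; linarith
    have hb : 1 + (1 / u i) * (y - 1) ≤ y ^ (1 / u i) := by
      have := one_add_mul_self_le_rpow_one_add (s := y - 1)
        (by linarith) (p := 1 / u i) ht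
      simpa using this
    have hpos : 0 < (1 / u i) * (y - 1) := by positivity
    have h2 : (1 / u i) * (y - 1) ≤ y ^ (1 / u i) - 1 := by linarith
    calc 1 / (y ^ (1 / u i) - 1) ≤ 1 / ((1 / u i) * (y - 1)) :=
          one_div_le_one_div_of_le hpos h2
      _ = u i * (1 / (y - 1)) := by field_simp
  calc ∑ i, 1 / (y ^ (1 / u i) - 1) ≤ ∑ i, u i * (1 / (y - 1)) :=
        Finset.sum_le_sum fun i _ => key i
    _ = 1 / (y - 1) := by rw [← Finset.sum_mul, hsum, one_mul]
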